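/- arXiv:2605.18106 — 3 statements merged into one kernel-verified Lean document; each statement's English description precedes it below -/
import Mathlib

section
/- Let E be a real inner product space, f : E → ℝ, and G : E → E such that f has gradient G(x) at every x ∈ E and G is Lipschitz with constant L > 0. Assume the μ-Polyak–Łojasiewicz condition: there are μ > 0 and f⋆ ∈ ℝ with f⋆ ≤ f(x) and ‖G(x)‖² ≥ 2μ(f(x) − f⋆) for all x ∈ E. Let T : E → E and let R̲ > 0 and α > 0 satisfy, for all g ∈ E, R̲·‖T(g)‖² ≤ ⟪g, T(g)⟫ and α‖g‖² ≤ ⟪g, T(g)⟫. Then for every γ with 0 < γ < 2R̲/L and every W ∈ E, f(W − γ T(G(W))) − f⋆ ≤ (1 − 2μαγ(1 − Lγ/(2R̲))) · (f(W) − f⋆). -/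
open scoped RealInnerProductSpace

lemma descent_lemma_aux
    {E : Type*} [NormedAddCommGroup E] [InnerProductSpace ℝ E] [CompleteSpace E]
    (f : E → ℝ) (G : E → E) (L : ℝ) (hL : 0 ≤ L)
    (hgrad : ∀ x, HasGradientAt f (G x) x)
    (hlip : ∀ x y, ‖G x - G y‖ ≤ L * ‖x - y‖) (x v : E) :
    f (x + v) ≤ f x + ⟪G x, v⟫ + L / 2 * ‖v‖ ^ 2 := by
  set h : ℝ → ℝ := fun t => f (x + t • v) - t * ⟪G x, v⟫ - L * t ^ 2 / 2 * ‖v‖ ^ 2 with hh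
  have hc : ∀ t : ℝ, HasDerivAt (fun s : ℝ => x + s • v) v t := fun t => by
    simpa using ((hasDerivAt_id t).smul_const v).const_add x
  have hd : ∀ t : ℝ, HasDerivAt h
      (⟪G (x + t • v), v⟫ - ⟪G x, v⟫ - L * t * ‖v‖ ^ 2) t := by
    intro t
    have h1 : HasDerivAt (fun s : ℝ => f (x + s • v)) (⟪G (x + t • v), v⟫) t := by
      have := ((hgrad (x + t • v)).hasFDerivAt.comp t (hc t).hasFDerivAt)
      have h' := this.hasDerivAt
      simp at h'
      exact h'
    have h2 : HasDerivAt (fun s : ℝ => s * ⟪G x, v⟫) (⟪G x, v⟫) t := by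
      simpa using (hasDerivAt_id t).mul_const (⟪G x, v⟫)
    have h3 : HasDerivAt (fun s : ℝ => L * s ^ 2 / 2 * ‖v‖ ^ 2) (L * t * ‖v‖ ^ 2) t := by
      have : HasDerivAt (fun s : ℝ => s ^ 2) (2 * t) t := by
        simpa using hasDerivAt_pow 2 t
      have := ((this.const_mul L).div_const 2).mul_const (‖v‖ ^ 2)
      exact this.congr_deriv (by ring)
    exact (h1.sub h2).sub h3
  have hderiv : ∀ t : ℝ, deriv h t = ⟪G (x + t • v), v⟫ - ⟪G x, v⟫ - L * t * ‖v‖ ^ 2 :=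
    fun t => (hd t).deriv
  have hanti : AntitoneOn h (Set.Icc 0 1) := by
    apply antitoneOn_of_deriv_nonpos (convex_Icc 0 1)
    · exact (Differentiable.continuous (fun t => (hd t).differentiableAt)).continuousOn
    · exact fun t _ => (hd t).differentiableAt.differentiableWithinAt
    · intro t ht
      rw [interior_Icc] at ht
      rw [hderiv]
      have h1 : ⟪G (x + t • v) - G x, v⟫ ≤ L * t * ‖v‖ ^ 2 := by
        calc ⟪G (x + t • v) - G x, v⟫ ≤ ‖G (x + t • v) - G x‖ * ‖v‖ :=
              real_inner_le_norm _ _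
          _ ≤ (L * ‖(x + t • v) - x‖) * ‖v‖ := by
              exact mul_le_mul_of_nonneg_right (hlip _ _) (norm_nonneg _)
          _ = L * t * ‖v‖ ^ 2 := by
              rw [add_sub_cancel_left, norm_smul, Real.norm_eq_abs,
                abs_of_pos ht.1]; ring
      have := inner_sub_left (𝕜 := ℝ) (G (x + t • v)) (G x) v
      linarith [this ▸ h1]
  have h01 := hanti (Set.left_mem_Icc.2 zero_le_one) (Set.right_mem_Icc.2 zero_le_one)
    zero_le_one
  simp only [hh, zero_smul, add_zero, one_smul] at h01
  nlinarith [h01]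

/-- Linear convergence under the PL condition with ratio and
alignment bounds: if `f` has an `L`-Lipschitz gradient `G`, satisfies the `μ`-PL
inequality relative to a lower bound `f⋆`, and `T` satisfies
`R̲‖T g‖² ≤ ⟪g, T g⟫` and `α‖g‖² ≤ ⟪g, T g⟫` with `R̲, α > 0`, then for every step
size `0 < γ < 2R̲/L` and every `W`,
`f(W − γ T(G W)) − f⋆ ≤ (1 − 2μαγ(1 − Lγ/(2R̲)))(f(W) − f⋆)`. -/
theorem linear_convergence_PL_ratio_alignment
    {E : Type*} [NormedAddCommGroup E] [InnerProductSpace ℝ E] [CompleteSpace E]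
    (f : E → ℝ) (G : E → E) (L : ℝ) (hL : 0 < L)
    (hgrad : ∀ x, HasGradientAt f (G x) x)
    (hlip : ∀ x y, ‖G x - G y‖ ≤ L * ‖x - y‖)
    (μ : ℝ) (hμ : 0 < μ) (fstar : ℝ) (hfstar : ∀ x, fstar ≤ f x)
    (hPL : ∀ x, ‖G x‖ ^ 2 ≥ 2 * μ * (f x - fstar))
    (T : E → E) (Rlo α : ℝ) (hRlo : 0 < Rlo) (hα : 0 < α)
    (hratio : ∀ g : E, Rlo * ‖T g‖ ^ 2 ≤ ⟪g, T g⟫)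
    (halign : ∀ g : E, α * ‖g‖ ^ 2 ≤ ⟪g, T g⟫) :
    ∀ γ : ℝ, 0 < γ → γ < 2 * Rlo / L →
      ∀ W : E,
        f (W - γ • T (G W)) - fstar ≤
          (1 - 2 * μ * α * γ * (1 - L * γ / (2 * Rlo))) * (f W - fstar) := by
  intro γ hγ hγ2 W
  set g := G W with hg
  have hdesc := descent_lemma_aux f G L hL.le hgrad hlip W (-(γ • T g))
  rw [← sub_eq_add_neg] at hdesc
  have hin : ⟪g, -(γ • T g)⟫ = -(γ * ⟪g, T g⟫) := by
    rw [inner_neg_right, real_inner_smul_right]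
  have hnorm : ‖-(γ • T g)‖ ^ 2 = γ ^ 2 * ‖T g‖ ^ 2 := by
    rw [norm_neg, norm_smul, Real.norm_eq_abs, abs_of_pos hγ, mul_pow]
  rw [hin, hnorm] at hdesc
  have hr := hratio g
  have ha := halign g
  have hp := hPL W
  have hfw := hfstar W
  -- ‖T g‖² ≤ ⟪g, T g⟫ / Rlo
  have hTg : ‖T g‖ ^ 2 ≤ ⟪g, T g⟫ / Rlo := by
    rw [le_div_iff₀ hRlo]; linarith [hr]
  have hinn : 0 ≤ ⟪g, T g⟫ := le_trans (by positivity) ha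
  have hγL : L * γ / (2 * Rlo) < 1 := by
    rw [div_lt_one (by positivity)]
    calc L * γ < L * (2 * Rlo / L) := by exact mul_lt_mul_of_pos_left hγ2 hL
      _ = 2 * Rlo := by field_simp
  have key : f (W - γ • T g) ≤ f W - γ * (1 - L * γ / (2 * Rlo)) * ⟪g, T g⟫ := by
    have h1 : L / 2 * (γ ^ 2 * ‖T g‖ ^ 2) ≤ L / 2 * (γ ^ 2 * (⟪g, T g⟫ / Rlo)) := by
      apply mul_le_mul_of_nonneg_left _ (by positivity)
      exact mul_le_mul_of_nonneg_left hTg (by positivity)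
    have : L / 2 * (γ ^ 2 * (⟪g, T g⟫ / Rlo)) = L * γ / (2 * Rlo) * γ * ⟪g, T g⟫ := by
      field_simp
    nlinarith [hdesc]
  have hgn : 2 * μ * α * (f W - fstar) ≤ ⟪g, T g⟫ := by
    have := mul_le_mul_of_nonneg_left hp hα.le
    rw [← hg] at this
    nlinarith
  have hcoef : 0 < γ * (1 - L * γ / (2 * Rlo)) := by
    apply mul_pos hγ; linarith
  nlinarith [mul_le_mul_of_nonneg_left hgn hcoef.le, key]
end

section
/- Let f be a real-valued function on the space of m×n real matrices equipped with the Frobenius inner product ⟪A, B⟫_F = tr(AᵀB), such that f has gradient ∇f(W) at every W and ∇f is Lipschitz with constant L > 0 in the Frobenius norm. Let W be an m×n real matrix, set G := ∇f(W), and assume GᵀG is positive definite with unique symmetric positive semidefinite square root S; set N := tr(S). Then for every γ > 0, f(W − γ N G S⁻¹) ≤ f(W) − γ(1 − (Lγ/2) n) · N². In particular, if 0 < γ < 2/(L n) then f(W − γ N G S⁻¹) ≤ f(W). -/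
open Matrix
open scoped RealInnerProductSpace

noncomputable section

/-- The Frobenius inner product `⟪A, B⟫_F = tr(AᵀB)` on `m×n` real matrices,
packaged as an `InnerProductSpace.Core`. -/
def frobeniusCore (m n : ℕ) :
    InnerProductSpace.Core ℝ (Matrix (Fin m) (Fin n) ℝ) where
  inner A B := (Aᵀ * B).trace
  conj_inner_symm := by
    intro x y
    have h : (yᵀ * x).trace = (xᵀ * y).trace := by
      rw [← Matrix.trace_transpose (yᵀ * x), Matrix.transpose_mul,
        Matrix.transpose_transpose]
    simpa using h
  re_inner_nonneg := by
    intro x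
    have h : (xᵀ * x).trace = ∑ j, ∑ i, x i j * x i j := by
      simp [Matrix.trace, Matrix.diag, Matrix.mul_apply]
    have h' : (0 : ℝ) ≤ (xᵀ * x).trace := by
      rw [h]
      exact Finset.sum_nonneg fun j _ => Finset.sum_nonneg fun i _ => mul_self_nonneg _
    simpa using h'
  add_left := by
    intro x y z
    simp [Matrix.transpose_add, Matrix.add_mul]
  smul_left := by
    intro x y r
    simp [Matrix.transpose_smul, Matrix.smul_mul]
  definite := by
    intro x hx
    have h : ∑ j, ∑ i, x i j * x i j = 0 := by
      have h' : (xᵀ * x).trace = ∑ j, ∑ i, x i j * x i j := by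
        simp [Matrix.trace, Matrix.diag, Matrix.mul_apply]
      rw [← h']
      simpa using hx
    ext i j
    have hj : ∀ j' ∈ Finset.univ, (0 : ℝ) ≤ ∑ i', x i' j' * x i' j' :=
      fun j' _ => Finset.sum_nonneg fun i' _ => mul_self_nonneg _
    have h3 : ∑ i', x i' j * x i' j = 0 :=
      (Finset.sum_eq_zero_iff_of_nonneg hj).mp h j (Finset.mem_univ j)
    have h4 : x i j * x i j = 0 :=
      (Finset.sum_eq_zero_iff_of_nonneg fun i' _ => mul_self_nonneg _).mp h3 i
        (Finset.mem_univ i)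
    simpa using mul_self_eq_zero.mp h4

/-- `m×n` real matrices as a normed group under the Frobenius norm. -/
instance (m n : ℕ) : NormedAddCommGroup (Matrix (Fin m) (Fin n) ℝ) :=
  (frobeniusCore m n).toNormedAddCommGroup

/-- `m×n` real matrices with the Frobenius inner product. -/
instance (m n : ℕ) : InnerProductSpace ℝ (Matrix (Fin m) (Fin n) ℝ) :=
  InnerProductSpace.ofCore (frobeniusCore m n).toCore

instance (m n : ℕ) : CompleteSpace (Matrix (Fin m) (Fin n) ℝ) :=
  FiniteDimensional.complete ℝ _

theorem descent_aux {F : Type*} [NormedAddCommGroup F] [InnerProductSpace ℝ F] [CompleteSpace F]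
    (f : F → ℝ) (g : F → F) (L : ℝ) (_hL : 0 ≤ L)
    (hgrad : ∀ x, HasGradientAt f (g x) x)
    (hlip : ∀ X Y, ‖g X - g Y‖ ≤ L * ‖X - Y‖) (x d : F) :
    f (x + d) ≤ f x + ⟪g x, d⟫ + L / 2 * ‖d‖ ^ 2 := by
  set h : ℝ → ℝ := fun t => f (x + t • d) - t * ⟪g x, d⟫ - L * t ^ 2 / 2 * ‖d‖ ^ 2 with hh
  have hderiv : ∀ t : ℝ, HasDerivAt h (⟪g (x + t • d), d⟫ - ⟪g x, d⟫ - L * t * ‖d‖ ^ 2) t := by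
    intro t
    have hc : HasDerivAt (fun t : ℝ => x + t • d) d t := by
      simpa using (hasDerivAt_id t).smul_const d |>.const_add x
    have h1 : HasDerivAt (fun t : ℝ => f (x + t • d)) ⟪g (x + t • d), d⟫ t := by
      have := ((hgrad (x + t • d)).hasFDerivAt.comp_hasDerivAt t hc)
      simp [InnerProductSpace.toDual_apply_apply] at this; exact this
    have h2 : HasDerivAt (fun t : ℝ => t * ⟪g x, d⟫) ⟪g x, d⟫ t := by
      simpa using (hasDerivAt_id t).mul_const (⟪g x, d⟫)
    have h3 : HasDerivAt (fun t : ℝ => L * t ^ 2 / 2 * ‖d‖ ^ 2) (L * t * ‖d‖ ^ 2) t := by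
      have : HasDerivAt (fun t : ℝ => t ^ 2) (2 * t) t := by
        simpa using hasDerivAt_pow 2 t
      have := ((this.const_mul L).div_const 2).mul_const (‖d‖ ^ 2)
      rw [show L * t * ‖d‖ ^ 2 = L * (2 * t) / 2 * ‖d‖ ^ 2 by ring]; exact this
    exact (h1.sub h2).sub h3
  have hanti : AntitoneOn h (Set.Ici 0) := by
    apply antitoneOn_of_deriv_nonpos (convex_Ici 0)
    · exact fun t _ => ((hderiv t).continuousAt).continuousWithinAt
    · exact fun t _ => ((hderiv t).differentiableAt).differentiableWithinAt
    · intro t ht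
      rw [interior_Ici] at ht
      rw [(hderiv t).deriv]
      have key : ⟪g (x + t • d) - g x, d⟫ ≤ L * t * ‖d‖ ^ 2 := by
        calc ⟪g (x + t • d) - g x, d⟫ ≤ ‖g (x + t • d) - g x‖ * ‖d‖ :=
              real_inner_le_norm _ _
          _ ≤ (L * ‖(x + t • d) - x‖) * ‖d‖ := by
              apply mul_le_mul_of_nonneg_right (hlip _ _) (norm_nonneg _)
          _ = L * t * ‖d‖ ^ 2 := by
              simp [norm_smul, abs_of_pos (Set.mem_Ioi.mp ht)]; ring
      have := inner_sub_left (𝕜 := ℝ) (g (x + t • d)) (g x) d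
      rw [this] at key
      linarith
  have h10 : h 1 ≤ h 0 := hanti Set.self_mem_Ici (Set.mem_Ici.mpr zero_le_one) zero_le_one
  simp only [hh] at h10
  norm_num at h10
  linarith

/-- Descent lemma for the nuclear-norm-scaled polar update:
if `f` has an `L`-Lipschitz Frobenius gradient, `G = ∇f(W)` has `GᵀG` positive
definite with unique symmetric psd square root `S`, and `N = tr S`, then for
every `γ > 0`, `f(W − γ N G S⁻¹) ≤ f(W) − γ(1 − (Lγ/2)n) N²`; in particular
the step is a descent step whenever `0 < γ < 2/(Ln)`. -/
theorem descent_lemma_nuclear_scaled_polargrad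
    {m n : ℕ} (f : Matrix (Fin m) (Fin n) ℝ → ℝ)
    (gradf : Matrix (Fin m) (Fin n) ℝ → Matrix (Fin m) (Fin n) ℝ)
    (L : ℝ) (hL : 0 < L)
    (hgrad : ∀ W, HasGradientAt f (gradf W) W)
    (hlip : ∀ X Y, ‖gradf X - gradf Y‖ ≤ L * ‖X - Y‖)
    (W G : Matrix (Fin m) (Fin n) ℝ) (hG : G = gradf W)
    (hpd : (Gᵀ * G).PosDef)
    (S : Matrix (Fin n) (Fin n) ℝ) (hS : S.PosSemidef) (hSsq : S * S = Gᵀ * G)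
    (N : ℝ) (hN : N = S.trace) :
    ∀ γ : ℝ, 0 < γ →
      f (W - (γ * N) • (G * S⁻¹)) ≤ f W - γ * (1 - L * γ / 2 * (n : ℝ)) * N ^ 2 ∧
      (γ < 2 / (L * (n : ℝ)) → f (W - (γ * N) • (G * S⁻¹)) ≤ f W) := by
  -- basic matrix facts
  have hinner : ∀ A B : Matrix (Fin m) (Fin n) ℝ, ⟪A, B⟫ = (Aᵀ * B).trace :=
    fun A B => rfl
  have hSt : Sᵀ = S := by
    have := hS.1
    exact this
  have hdet : IsUnit S.det := by
    have h1 : S.det * S.det = (Gᵀ * G).det := by rw [← Matrix.det_mul, hSsq]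
    have h2 : 0 < (Gᵀ * G).det := hpd.det_pos
    have : S.det ≠ 0 := by intro h; rw [h] at h1; simp at h1; linarith
    exact isUnit_iff_ne_zero.mpr this
  have hSinv : S * S⁻¹ = 1 := Matrix.mul_nonsing_inv S hdet
  have hSinv' : S⁻¹ * S = 1 := Matrix.nonsing_inv_mul S hdet
  have e1 : Gᵀ * (G * S⁻¹) = S := by
    rw [← Matrix.mul_assoc, ← hSsq, Matrix.mul_assoc, hSinv, Matrix.mul_one]
  have htr1 : ⟪G, G * S⁻¹⟫ = N := by rw [hinner, e1, hN]
  have e2 : (G * S⁻¹)ᵀ * (G * S⁻¹) = 1 := by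
    rw [Matrix.transpose_mul, Matrix.transpose_nonsing_inv, hSt, Matrix.mul_assoc, e1, hSinv']
  have hnormsq : ‖G * S⁻¹‖ ^ 2 = (n : ℝ) := by
    have h0 : ⟪G * S⁻¹, G * S⁻¹⟫ = ‖G * S⁻¹‖ ^ 2 := real_inner_self_eq_norm_sq _
    rw [hinner, e2] at h0
    rw [← h0]
    simp [Matrix.trace_one]
  intro γ hγ
  have hd := descent_aux f gradf L hL.le hgrad hlip W (-((γ * N) • (G * S⁻¹)))
  rw [← sub_eq_add_neg] at hd
  have hin : ⟪gradf W, -((γ * N) • (G * S⁻¹))⟫ = -((γ * N) * N) := by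
    rw [inner_neg_right, real_inner_smul_right, ← hG, htr1]
  have hnrm : ‖-((γ * N) • (G * S⁻¹))‖ ^ 2 = (γ * N) ^ 2 * (n : ℝ) := by
    rw [norm_neg, norm_smul, mul_pow, Real.norm_eq_abs, sq_abs, hnormsq]
  rw [hin, hnrm] at hd
  have hmain : f (W - (γ * N) • (G * S⁻¹)) ≤ f W - γ * (1 - L * γ / 2 * (n : ℝ)) * N ^ 2 := by
    have : f W + -(γ * N * N) + L / 2 * ((γ * N) ^ 2 * (n : ℝ))
        = f W - γ * (1 - L * γ / 2 * (n : ℝ)) * N ^ 2 := by ring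
    linarith [hd, this.le]
  refine ⟨hmain, fun hlt => ?_⟩
  have hstep : 0 ≤ γ * (1 - L * γ / 2 * (n : ℝ)) * N ^ 2 := by
    rcases Nat.eq_zero_or_pos n with hn | hn
    · exfalso
      rw [hn] at hlt
      norm_num at hlt
      linarith
    · have hnpos : (0 : ℝ) < (n : ℝ) := by exact_mod_cast hn
      have hLn : 0 < L * (n : ℝ) := mul_pos hL hnpos
      have : γ * (L * (n : ℝ)) < 2 := by
        rwa [← lt_div_iff₀ hLn]
      have h1 : 0 ≤ 1 - L * γ / 2 * (n : ℝ) := by nlinarith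
      positivity
  linarith


end
end

section
/- Let f be a real-valued function on the space of v×d real matrices equipped with the Frobenius inner product ⟪A, B⟫_F = tr(AᵀB), such that f has gradient ∇f(W) at every W and ∇f is Lipschitz with constant L > 0 in the Frobenius norm. Assume the μ-Polyak–Łojasiewicz condition: there are μ > 0 and f⋆ ∈ ℝ with f⋆ ≤ f(W) and ‖∇f(W)‖_F² ≥ 2μ(f(W) − f⋆) for all W. Let η : ℝ → ℝ and 0 < η̲ ≤ η̄ satisfy η̲ ≤ η(t) ≤ η̄ for all t ≥ 0, and for a matrix M let D_η(M) be the diagonal matrix with entries η applied to the Euclidean norms of the rows of M. Then for every γ with 0 < γ < 2η̲/(L η̄²) and every v×d matrix W, f(W − γ D_η(∇f(W)) ∇f(W)) − f⋆ ≤ (1 − 2μγ(η̲ − (L η̄²/2)γ)) · (f(W) − f⋆). -/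
open Matrix
open scoped RealInnerProductSpace

noncomputable section

open intervalIntegral in
lemma descent_lemma {E : Type*} [NormedAddCommGroup E] [InnerProductSpace ℝ E] [CompleteSpace E]
    (f : E → ℝ) (gradf : E → E) (L : ℝ) (hL : 0 ≤ L)
    (hgrad : ∀ x, HasGradientAt f (gradf x) x)
    (hlip : ∀ X Y, ‖gradf X - gradf Y‖ ≤ L * ‖X - Y‖) (x p : E) :
    f (x + p) ≤ f x + ⟪gradf x, p⟫ + L / 2 * ‖p‖ ^ 2 := by
  set c : ℝ → E := fun t => x + t • p with hc
  have hcd : ∀ t : ℝ, HasDerivAt c p t := fun t => by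
    have h := ((hasDerivAt_id t).smul_const p).const_add x; rw [one_smul] at h; exact h
  have hgd : ∀ t : ℝ, HasDerivAt (fun s => f (c s)) ⟪gradf (c t), p⟫ t := by
    intro t
    have h1 := (hgrad (c t)).hasFDerivAt.comp_hasDerivAt t (hcd t)
    exact h1
  -- continuity of gradient
  have hgc : Continuous gradf := by
    have : LipschitzWith (Real.toNNReal L) gradf :=
      LipschitzWith.of_dist_le_mul fun X Y => by
        rw [dist_eq_norm, dist_eq_norm, Real.coe_toNNReal L hL]
        exact hlip X Y
    exact this.continuous
  have hcont : Continuous fun t : ℝ => ⟪gradf (c t), p⟫ :=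
    (hgc.comp (by continuity : Continuous c)).inner continuous_const
  have hint : f (x + p) - f x = ∫ t in (0:ℝ)..1, ⟪gradf (c t), p⟫ := by
    have := intervalIntegral.integral_eq_sub_of_hasDerivAt
      (fun t _ => hgd t) (hcont.intervalIntegrable 0 1)
    simp only [hc] at this
    rw [this]; norm_num
  have hbound : ∀ t ∈ Set.Icc (0:ℝ) 1,
      ⟪gradf (c t), p⟫ ≤ ⟪gradf x, p⟫ + L * t * ‖p‖ ^ 2 := by
    intro t ht
    have h1 : ⟪gradf (c t), p⟫ - ⟪gradf x, p⟫ = ⟪gradf (c t) - gradf x, p⟫ := by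
      rw [inner_sub_left]
    have h2 : ⟪gradf (c t) - gradf x, p⟫ ≤ ‖gradf (c t) - gradf x‖ * ‖p‖ :=
      real_inner_le_norm _ _
    have h3 : ‖gradf (c t) - gradf x‖ ≤ L * (t * ‖p‖) := by
      have := hlip (c t) x
      simpa [hc, norm_smul, abs_of_nonneg ht.1] using this
    nlinarith [norm_nonneg p, norm_nonneg (gradf (c t) - gradf x)]
  have hmono : (∫ t in (0:ℝ)..1, ⟪gradf (c t), p⟫) ≤
      ∫ t in (0:ℝ)..1, (⟪gradf x, p⟫ + L * t * ‖p‖ ^ 2) := by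
    apply intervalIntegral.integral_mono_on (by norm_num)
      (hcont.intervalIntegrable 0 1)
      ((by continuity : Continuous fun t : ℝ => ⟪gradf x, p⟫ + L * t * ‖p‖ ^ 2).intervalIntegrable 0 1)
    exact hbound
  have hval : (∫ t in (0:ℝ)..1, (⟪gradf x, p⟫ + L * t * ‖p‖ ^ 2)) =
      ⟪gradf x, p⟫ + L / 2 * ‖p‖ ^ 2 := by
    rw [intervalIntegral.integral_add (intervalIntegrable_const)
      (by apply Continuous.intervalIntegrable; continuity)]
    have h5 : (∫ t in (0:ℝ)..1, L * t * ‖p‖ ^ 2) = L / 2 * ‖p‖ ^ 2 := by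
      have he : (∫ t in (0:ℝ)..1, L * t * ‖p‖ ^ 2) = ∫ t in (0:ℝ)..1, (L * ‖p‖ ^ 2) * t := by
        congr 1; ext t; ring
      rw [he, intervalIntegral.integral_const_mul, integral_id]; ring
    rw [h5]; simp
  linarith [hint ▸ (hmono.trans_eq hval)]

lemma frob_inner_eq {m n : ℕ} (A B : Matrix (Fin m) (Fin n) ℝ) :
    ⟪A, B⟫ = ∑ i, ∑ j, A i j * B i j := by
  show (Aᵀ * B).trace = _
  rw [Finset.sum_comm]
  simp [Matrix.trace, Matrix.diag, Matrix.mul_apply]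

set_option maxHeartbeats 1000000 in
/-- Linear convergence of the row-norm update under the
Polyak–Łojasiewicz condition: if `f` has an `L`-Lipschitz Frobenius gradient,
satisfies the `μ`-PL inequality relative to a lower bound `f⋆`, and
`0 < η̲ ≤ η(t) ≤ η̄` for all `t ≥ 0`, then for every step size
`0 < γ < 2η̲/(Lη̄²)` and every `v×d` matrix `W`,
`f(W − γ D_η(∇f(W)) ∇f(W)) − f⋆ ≤ (1 − 2μγ(η̲ − (Lη̄²/2)γ))(f(W) − f⋆)`,
where `D_η(M)` is the diagonal matrix of `η` applied to the row norms of `M`. -/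
theorem linear_convergence_PL_row_norm_update
    {v d : ℕ} (f : Matrix (Fin v) (Fin d) ℝ → ℝ)
    (gradf : Matrix (Fin v) (Fin d) ℝ → Matrix (Fin v) (Fin d) ℝ)
    (L : ℝ) (hL : 0 < L)
    (hgrad : ∀ W, HasGradientAt f (gradf W) W)
    (hlip : ∀ X Y, ‖gradf X - gradf Y‖ ≤ L * ‖X - Y‖)
    (μ : ℝ) (hμ : 0 < μ) (fstar : ℝ) (hfstar : ∀ W, fstar ≤ f W)
    (hPL : ∀ W, ‖gradf W‖ ^ 2 ≥ 2 * μ * (f W - fstar))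
    (η : ℝ → ℝ) (ηlo ηhi : ℝ) (hηlo : 0 < ηlo) (hηle : ηlo ≤ ηhi)
    (hη : ∀ t : ℝ, 0 ≤ t → ηlo ≤ η t ∧ η t ≤ ηhi)
    -- `D_η(M)` is the diagonal matrix of `η` applied to the row norms of `M`
    (Dη : Matrix (Fin v) (Fin d) ℝ → Matrix (Fin v) (Fin v) ℝ)
    (hDη : ∀ M, Dη M = Matrix.diagonal fun i => η (Real.sqrt (∑ j, (M i j) ^ 2))) :
    ∀ γ : ℝ, 0 < γ → γ < 2 * ηlo / (L * ηhi ^ 2) →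
      ∀ W : Matrix (Fin v) (Fin d) ℝ,
        f (W - γ • (Dη (gradf W) * gradf W)) - fstar ≤
          (1 - 2 * μ * γ * (ηlo - L * ηhi ^ 2 / 2 * γ)) * (f W - fstar) := by
  intro γ hγ0 hγ W
  set G := gradf W with hG
  set D := Dη G with hD
  set p := -(γ • (D * G)) with hp
  have hηhi : 0 < ηhi := hηlo.trans_le hηle
  have hLηhi : 0 < L * ηhi ^ 2 := by positivity
  set e : Fin v → ℝ := fun i => η (Real.sqrt (∑ j, (G i j) ^ 2)) with he
  have heb : ∀ i, ηlo ≤ e i ∧ e i ≤ ηhi := fun i => hη _ (Real.sqrt_nonneg _)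
  have hDG : ∀ i j, (D * G) i j = e i * G i j := by
    intro i j
    rw [hD, hDη]
    simp [Matrix.mul_apply, Matrix.diagonal_apply, he]
  have hnG : ‖G‖ ^ 2 = ∑ i, ∑ j, G i j * G i j := by
    rw [← real_inner_self_eq_norm_sq, frob_inner_eq]
  have hinner : ⟪G, p⟫ ≤ -(γ * ηlo) * ‖G‖ ^ 2 := by
    rw [hp, inner_neg_right, real_inner_smul_right, frob_inner_eq, hnG]
    have h2 : ηlo * ∑ i, ∑ j, G i j * G i j ≤ ∑ i, ∑ j, G i j * (D * G) i j := by
      rw [Finset.mul_sum]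
      refine Finset.sum_le_sum fun i _ => ?_
      rw [Finset.mul_sum]
      refine Finset.sum_le_sum fun j _ => ?_
      rw [hDG]
      nlinarith [mul_self_nonneg (G i j), (heb i).1]
    nlinarith
  have hnorm : ‖p‖ ^ 2 ≤ γ ^ 2 * ηhi ^ 2 * ‖G‖ ^ 2 := by
    have h0 : ‖p‖ ^ 2 = γ ^ 2 * ‖D * G‖ ^ 2 := by
      rw [hp, norm_neg, norm_smul, mul_pow, Real.norm_eq_abs, sq_abs]
    have h1 : ‖D * G‖ ^ 2 = ∑ i, ∑ j, (e i * G i j) * (e i * G i j) := by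
      rw [← real_inner_self_eq_norm_sq, frob_inner_eq]
      refine Finset.sum_congr rfl fun i _ => Finset.sum_congr rfl fun j _ => ?_
      rw [hDG]
    have h3 : ‖D * G‖ ^ 2 ≤ ηhi ^ 2 * ‖G‖ ^ 2 := by
      rw [h1, hnG, Finset.mul_sum]
      refine Finset.sum_le_sum fun i _ => ?_
      rw [Finset.mul_sum]
      refine Finset.sum_le_sum fun j _ => ?_
      have h4 := (heb i).1
      have h5 := (heb i).2
      have he2 : e i * e i ≤ ηhi * ηhi := mul_le_mul h5 h5 (by linarith) (by linarith)
      nlinarith [mul_self_nonneg (G i j), he2]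
    nlinarith [sq_nonneg γ]
  have hdes := descent_lemma f gradf L hL.le hgrad hlip W p
  have hstep : f (W + p) ≤ f W - γ * (ηlo - L * ηhi ^ 2 / 2 * γ) * ‖G‖ ^ 2 := by
    have h6 : L / 2 * ‖p‖ ^ 2 ≤ L / 2 * (γ ^ 2 * ηhi ^ 2 * ‖G‖ ^ 2) :=
      mul_le_mul_of_nonneg_left hnorm (by positivity)
    nlinarith
  have hγ2 : γ * (L * ηhi ^ 2) < 2 * ηlo := (lt_div_iff₀ hLηhi).mp hγ
  have hc : 0 < γ * (ηlo - L * ηhi ^ 2 / 2 * γ) := by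
    apply mul_pos hγ0
    nlinarith
  have hW : W - γ • (Dη (gradf W) * gradf W) = W + p := by
    rw [hp, ← hG, ← hD, sub_eq_add_neg]
  rw [hW]
  have hq := mul_le_mul_of_nonneg_left (hPL W) hc.le
  have hre : (1 - 2 * μ * γ * (ηlo - L * ηhi ^ 2 / 2 * γ)) * (f W - fstar) =
      (f W - fstar) - γ * (ηlo - L * ηhi ^ 2 / 2 * γ) * (2 * μ * (f W - fstar)) := by ring
  rw [hre]
  nlinarith


end
end
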